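/- Let cl be a closure operator on the subsets of a universe X (i.e., A ⊆ B implies cl(A) ⊆ cl(B), and A ⊆ cl(A) = cl(cl(A)) for all A, B ⊆ X), let m ≥ 1, and let 𝓒[m] be the concept class of all closed sets C ⊆ X with s_cl(C) ≤ m, where s_cl(C) is the least cardinality of a set S ⊆ X with cl(S) = C. Then PBTD⁺(𝓒[m]) ≤ PBTD⁺(𝓒[m], ⊃) ≤ m; moreover, if there exists a closed set C with s_cl(C) = m (i.e., 𝓒[m] \ 𝓒[m−1] ≠ ∅), then PBTD⁺(𝓒[m]) = m. -/
import Mathlib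


namespace PBT

variable {X : Type*}

/-- A set `L ⊆ X` is consistent with a set `T` of labeled examples
(label `true` = “+”, label `false` = “−”). -/
def Consistent (L : Set X) (T : Set (X × Bool)) : Prop :=
  ∀ p ∈ T, (p.2 = true → p.1 ∈ L) ∧ (p.2 = false → p.1 ∉ L)

/-- `T` is a teaching set for `L` w.r.t. the concept class `𝓛`:
`L` is the only concept in `𝓛` that is consistent with `T`. -/
def IsTeachingSet (𝓛 : Set (Set X)) (L : Set X) (T : Set (X × Bool)) : Prop :=
  Consistent L T ∧ ∀ L' ∈ 𝓛, Consistent L' T → L' = L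

/-- `TD L 𝓛`: least size of a finite teaching set for `L` w.r.t. `𝓛` (`⊤` if none exists). -/
noncomputable def TD (L : Set X) (𝓛 : Set (Set X)) : ℕ∞ :=
  sInf {n : ℕ∞ | ∃ T : Finset (X × Bool), IsTeachingSet 𝓛 L ↑T ∧ n = T.card}

/-- A positive teaching set, identified with its set of (positively labeled) points. -/
def IsPosTeachingSet (𝓛 : Set (Set X)) (L : Set X) (S : Set X) : Prop :=
  S ⊆ L ∧ ∀ L' ∈ 𝓛, S ⊆ L' → L' = L

/-- least size of a finite positive teaching set for `L` w.r.t. `𝓛` (`⊤` if none exists). -/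
noncomputable def TDpos (L : Set X) (𝓛 : Set (Set X)) : ℕ∞ :=
  sInf {n : ℕ∞ | ∃ S : Finset X, IsPosTeachingSet 𝓛 L ↑S ∧ n = S.card}

/-- A strict partial order (preference relation) on concepts:
`pr L' L` means `L` is strictly preferred over `L'`. -/
def StrictPO (pr : Set X → Set X → Prop) : Prop :=
  (∀ A, ¬ pr A A) ∧ ∀ A B C : Set X, pr A B → pr B C → pr A C

/-- `PBTDord 𝓛 pr = sup_{L ∈ 𝓛} TD(L, 𝓛 \ {L' ∈ 𝓛 | pr L' L})`. -/
noncomputable def PBTDord (𝓛 : Set (Set X)) (pr : Set X → Set X → Prop) : ℕ∞ :=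
  ⨆ L ∈ 𝓛, TD L {L' ∈ 𝓛 | ¬ pr L' L}

/-- preference-based teaching dimension of `𝓛`. -/
noncomputable def PBTD (𝓛 : Set (Set X)) : ℕ∞ :=
  sInf {v : ℕ∞ | ∃ pr, StrictPO pr ∧ v = PBTDord 𝓛 pr}

/-- `PBTDposOrd 𝓛 pr = sup_{L ∈ 𝓛} TD⁺(L, 𝓛 \ {L' ∈ 𝓛 | pr L' L})`. -/
noncomputable def PBTDposOrd (𝓛 : Set (Set X)) (pr : Set X → Set X → Prop) : ℕ∞ :=
  ⨆ L ∈ 𝓛, TDpos L {L' ∈ 𝓛 | ¬ pr L' L}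

/-- positive preference-based teaching dimension of `𝓛`. -/
noncomputable def PBTDpos (𝓛 : Set (Set X)) : ℕ∞ :=
  sInf {v : ℕ∞ | ∃ pr, StrictPO pr ∧ v = PBTDposOrd 𝓛 pr}


/-- `s_cl(C)`: least cardinality of a (finite) set `S` with `cl S = C` (`⊤` if none exists). -/
noncomputable def scl (cl : Set X → Set X) (C : Set X) : ℕ∞ :=
  sInf {n : ℕ∞ | ∃ S : Finset X, cl ↑S = C ∧ n = S.card}

/-- `𝓒[m]`: the class of all closed sets `C` with `s_cl(C) ≤ m`. -/
def closedClass (cl : Set X → Set X) (m : ℕ) : Set (Set X) :=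
  {C | cl C = C ∧ scl cl C ≤ (m : ℕ∞)}

/-- For a closure operator `cl` and `m ≥ 1`:
`PBTD⁺(𝓒[m]) ≤ PBTD⁺(𝓒[m], ⊃) ≤ m`, with `PBTD⁺(𝓒[m]) = m` if some closed set
has `s_cl(C) = m`.  (Here the preference `pr L' L ↔ L' ⊃ L` prefers proper subsets.) -/
theorem pbtdpos_of_closure_operator {X : Type*} (cl : Set X → Set X)
    (hmono : ∀ A B : Set X, A ⊆ B → cl A ⊆ cl B)
    (hext : ∀ A : Set X, A ⊆ cl A)
    (hidem : ∀ A : Set X, cl (cl A) = cl A)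
    (m : ℕ) (hm : 1 ≤ m) :
    PBTDpos (closedClass cl m) ≤ PBTDposOrd (closedClass cl m) (fun L' L => L ⊂ L') ∧
    PBTDposOrd (closedClass cl m) (fun L' L => L ⊂ L') ≤ (m : ℕ∞) ∧
    ((∃ C : Set X, cl C = C ∧ scl cl C = (m : ℕ∞)) →
      PBTDpos (closedClass cl m) = (m : ℕ∞)) := by
  classical
  have hpo : StrictPO (fun L' L : Set X => L ⊂ L') :=
    ⟨fun A h => h.2 h.1, fun A B C h1 h2 => h2.trans h1⟩
  -- Part 1
  have hle1 : PBTDpos (closedClass cl m) ≤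
      PBTDposOrd (closedClass cl m) (fun L' L => L ⊂ L') :=
    sInf_le ⟨fun L' L => L ⊂ L', hpo, rfl⟩
  -- Part 2
  have hub : PBTDposOrd (closedClass cl m) (fun L' L => L ⊂ L') ≤ (m : ℕ∞) := by
    refine iSup₂_le fun L hL => ?_
    obtain ⟨hclosed, hscl⟩ := hL
    have h1 : scl cl L < ((m + 1 : ℕ) : ℕ∞) :=
      lt_of_le_of_lt hscl (by exact_mod_cast Nat.lt_succ_self m)
    rw [scl] at h1
    obtain ⟨n, ⟨S, hS, rfl⟩, hn⟩ := sInf_lt_iff.mp h1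
    have hcard : S.card ≤ m := Nat.lt_succ_iff.mp (by exact_mod_cast hn)
    have hts : IsPosTeachingSet
        {L' ∈ closedClass cl m | ¬ (L ⊂ L')} L ↑S := by
      constructor
      · calc (↑S : Set X) ⊆ cl ↑S := hext _
          _ = L := hS
      · rintro L' ⟨⟨hL'cl, _⟩, hnpr⟩ hSL'
        have hsub : L ⊆ L' := by
          calc L = cl ↑S := hS.symm
            _ ⊆ cl L' := hmono _ _ hSL'
            _ = L' := hL'cl
        by_contra hne
        exact hnpr ⟨hsub, fun h => hne (le_antisymm h hsub)⟩
    calc TDpos L {L' ∈ closedClass cl m | ¬ (L ⊂ L')}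
        ≤ (S.card : ℕ∞) := sInf_le ⟨S, hts, rfl⟩
      _ ≤ (m : ℕ∞) := by exact_mod_cast hcard
  refine ⟨hle1, hub, ?_⟩
  rintro ⟨C, hCcl, hsclC⟩
  refine le_antisymm (hle1.trans hub) ?_
  refine le_sInf ?_
  rintro v ⟨pr, hprpo, rfl⟩
  by_contra hlt
  push_neg at hlt
  have hCmem : C ∈ closedClass cl m := ⟨hCcl, le_of_eq hsclC⟩
  -- teaching set for C
  have h1 : TDpos C {L' ∈ closedClass cl m | ¬ pr L' C} < (m : ℕ∞) :=
    lt_of_le_of_lt (le_iSup₂ (f := fun L (_ : L ∈ closedClass cl m) =>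
      TDpos L {L' ∈ closedClass cl m | ¬ pr L' L}) C hCmem) hlt
  rw [TDpos] at h1
  obtain ⟨n, ⟨S, ⟨hSsub, hSteach⟩, rfl⟩, hn⟩ := sInf_lt_iff.mp h1
  have hcardS : S.card < m := by exact_mod_cast hn
  set C' : Set X := cl ↑S with hC'def
  have hsclC' : scl cl C' ≤ (S.card : ℕ∞) := sInf_le ⟨S, rfl, rfl⟩
  have hC'mem : C' ∈ closedClass cl m :=
    ⟨hidem _, hsclC'.trans (by exact_mod_cast hcardS.le)⟩
  have hC'ne : C' ≠ C := by
    intro h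
    have : (m : ℕ∞) < (m : ℕ∞) :=
      lt_of_le_of_lt (hsclC ▸ h ▸ hsclC') (by exact_mod_cast hcardS)
    exact lt_irrefl _ this
  have hprC' : pr C' C := by
    by_contra hnpr
    exact hC'ne (hSteach C' ⟨hC'mem, hnpr⟩ (hext _))
  have hC'subC : C' ⊆ C := by
    calc C' = cl ↑S := rfl
      _ ⊆ cl C := hmono _ _ hSsub
      _ = C := hCcl
  -- teaching set for C'
  have h2 : TDpos C' {L' ∈ closedClass cl m | ¬ pr L' C'} < (m : ℕ∞) :=
    lt_of_le_of_lt (le_iSup₂ (f := fun L (_ : L ∈ closedClass cl m) =>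
      TDpos L {L' ∈ closedClass cl m | ¬ pr L' L}) C' hC'mem) hlt
  rw [TDpos] at h2
  obtain ⟨n', ⟨S', ⟨hS'sub, hS'teach⟩, rfl⟩, _⟩ := sInf_lt_iff.mp h2
  have hnprC : ¬ pr C C' := fun h => hprpo.1 C' (hprpo.2 C' C C' hprC' h)
  have hS'C : (↑S' : Set X) ⊆ C := hS'sub.trans hC'subC
  exact hC'ne (hS'teach C ⟨hCmem, hnprC⟩ hS'C).symm

end PBT
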